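/- There exists a 3-player temporal cooperative game that is monotone and admits exactly one basis solution x, and for which Ext-Shap_1 > x_1; consequently no solution concept satisfying I4OA, OIR, and SE can have its reduction equal to Ext-Shap. Concretely, the game with v(1)=1, v(2)=3, v(3)=4, v(12)=3, v(13)=4, v(21)=4, v(23)=5, v(31)=5, v(32)=5, v(123)=7, v(132)=6, v(213)=8, v(231)=7, v(312)=7, v(321)=7 has unique basis solution x=(1,3,4) (with optimal sequence 213 of worth 8), while Ext-Shap_1 = 8/6 > 1. -/

import Mathlib

noncomputable section

/-- Sequences of players (lists over `Fin n`); injective sequences are `Nodup` lists. -/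
abbrev TSeq (n : ℕ) := List (Fin n)

/-- `prefBefore π i` is the longest prefix of `π` not containing `i`. -/
def prefBefore {n : ℕ} (π : TSeq n) (i : Fin n) : TSeq n := π.takeWhile (· ≠ i)

/-- The marginal-contribution solution concept. -/
def margSol {n : ℕ} (v : TSeq n → ℝ) (π : TSeq n) (i : Fin n) : ℝ :=
  if i ∈ π then v (prefBefore π i ++ [i]) - v (prefBefore π i) else 0

/-- The extended Shapley value: average marginal contribution over all full sequences,
    identified with permutations of `Fin n` via `List.ofFn`. -/
def extShap {n : ℕ} (v : TSeq n → ℝ) (i : Fin n) : ℝ :=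
  (1 / n.factorial : ℝ) * ∑ σ : Equiv.Perm (Fin n), margSol v (List.ofFn ⇑σ) i

/-- `swapSeq i j π` swaps players `i` and `j` throughout the sequence `π`. -/
def swapSeq {n : ℕ} (i j : Fin n) (π : TSeq n) : TSeq n := π.map (Equiv.swap i j)

/-- The concrete game. -/
def v3 (π : TSeq 3) : ℝ :=
  if π = [0] then 1 else if π = [1] then 3 else if π = [2] then 4 else
  if π = [0,1] then 3 else if π = [0,2] then 4 else if π = [1,0] then 4 else
  if π = [1,2] then 5 else if π = [2,0] then 5 else if π = [2,1] then 5 else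
  if π = [0,1,2] then 7 else if π = [0,2,1] then 6 else if π = [1,0,2] then 8 else
  if π = [1,2,0] then 7 else if π = [2,0,1] then 7 else if π = [2,1,0] then 7 else 0

lemma enum3 (π : TSeq 3) (h : π.Nodup) :
    π = [] ∨ π = [0] ∨ π = [1] ∨ π = [2] ∨ π = [0,1] ∨ π = [0,2] ∨ π = [1,0] ∨
    π = [1,2] ∨ π = [2,0] ∨ π = [2,1] ∨ π = [0,1,2] ∨ π = [0,2,1] ∨ π = [1,0,2] ∨
    π = [1,2,0] ∨ π = [2,0,1] ∨ π = [2,1,0] := by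
  have hl := h.length_le_card
  simp [Fintype.card_fin] at hl
  rcases π with _|⟨a, _|⟨b, _|⟨c, _|⟨d, t⟩⟩⟩⟩
  · tauto
  · fin_cases a <;> tauto
  · simp at h; fin_cases a <;> fin_cases b <;> simp_all
  · simp at h; fin_cases a <;> fin_cases b <;> fin_cases c <;> simp_all
  · simp at hl; omega

lemma mono3 : ∀ π π' : TSeq 3, π'.Nodup → π ≠ [] → π <+: π' → v3 π ≤ v3 π' := by
  intro π π' h' hne hpre
  have hn : π.Nodup := hpre.sublist.nodup h'
  rcases enum3 π hn with rfl|rfl|rfl|rfl|rfl|rfl|rfl|rfl|rfl|rfl|rfl|rfl|rfl|rfl|rfl|rfl <;>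
  rcases enum3 π' h' with rfl|rfl|rfl|rfl|rfl|rfl|rfl|rfl|rfl|rfl|rfl|rfl|rfl|rfl|rfl|rfl <;>
  first
    | exact absurd rfl hne
    | (exfalso; revert hpre; decide)
    | (simp (config := {decide := true}) [v3]; try norm_num)

lemma opt3 : ∀ π : TSeq 3, π.Nodup → π ≠ [] → v3 π ≤ 8 := by
  intro π hn hne
  rcases enum3 π hn with rfl|rfl|rfl|rfl|rfl|rfl|rfl|rfl|rfl|rfl|rfl|rfl|rfl|rfl|rfl|rfl <;>
  first
    | exact absurd rfl hne
    | (simp (config := {decide := true}) [v3]; try norm_num)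

lemma basis3 (x : Fin 3 → ℝ) :
    ((∀ π : TSeq 3, π.Nodup → π ≠ [] → v3 π ≤ ∑ i ∈ π.toFinset, x i) ∧
     ∑ i : Fin 3, x i = 8)
    ↔ (x 0 = 1 ∧ x 1 = 3 ∧ x 2 = 4) := by
  constructor
  · rintro ⟨hcons, hsum⟩
    have h0 := hcons [0] (by decide) (by decide)
    have h1 := hcons [1] (by decide) (by decide)
    have h2 := hcons [2] (by decide) (by decide)
    simp (config := {decide := true}) [v3] at h0 h1 h2
    rw [Fin.sum_univ_three] at hsum
    refine ⟨by linarith, by linarith, by linarith⟩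
  · rintro ⟨h0, h1, h2⟩
    constructor
    · intro π hn hne
      rcases enum3 π hn with rfl|rfl|rfl|rfl|rfl|rfl|rfl|rfl|rfl|rfl|rfl|rfl|rfl|rfl|rfl|rfl <;>
      first
        | exact absurd rfl hne
        | (simp (config := {decide := true}) [v3, List.toFinset_cons, List.toFinset_nil,
            Finset.sum_insert, h0, h1, h2]; try norm_num)
    · rw [Fin.sum_univ_three, h0, h1, h2]; norm_num

lemma univ_perm3 : (Finset.univ : Finset (Equiv.Perm (Fin 3))) =
    {Equiv.refl _, Equiv.swap 0 1, Equiv.swap 0 2, Equiv.swap 1 2,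
     Equiv.swap 0 1 * Equiv.swap 1 2, Equiv.swap 1 2 * Equiv.swap 0 1} := by decide

lemma sum_perm3 (f : TSeq 3 → ℝ) :
    ∑ σ : Equiv.Perm (Fin 3), f (List.ofFn ⇑σ)
      = f [0,1,2] + f [1,0,2] + f [2,1,0] + f [0,2,1] + f [1,2,0] + f [2,0,1] := by
  rw [univ_perm3, Finset.sum_insert (by decide), Finset.sum_insert (by decide),
      Finset.sum_insert (by decide), Finset.sum_insert (by decide),
      Finset.sum_insert (by decide), Finset.sum_singleton,
      show (List.ofFn ⇑(Equiv.refl (Fin 3))) = ([0,1,2] : TSeq 3) from by decide,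
      show (List.ofFn ⇑(Equiv.swap 0 1 : Equiv.Perm (Fin 3))) = ([1,0,2] : TSeq 3) from by decide,
      show (List.ofFn ⇑(Equiv.swap 0 2 : Equiv.Perm (Fin 3))) = ([2,1,0] : TSeq 3) from by decide,
      show (List.ofFn ⇑(Equiv.swap 1 2 : Equiv.Perm (Fin 3))) = ([0,2,1] : TSeq 3) from by decide,
      show (List.ofFn ⇑(Equiv.swap 0 1 * Equiv.swap 1 2 : Equiv.Perm (Fin 3))) = ([1,2,0] : TSeq 3) from by decide,
      show (List.ofFn ⇑(Equiv.swap 1 2 * Equiv.swap 0 1 : Equiv.Perm (Fin 3))) = ([2,0,1] : TSeq 3) from by decide]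
  ring

lemma extShap3 : extShap v3 0 = 8 / 6 := by
  rw [extShap, sum_perm3 (fun π => margSol v3 π 0)]
  simp (config := {decide := true}) [margSol, prefBefore, v3]
  norm_num [Nat.factorial]

/-- a concrete monotone 3-player TCG with a unique basis solution x = (1,3,4),
    optimal sequence 213 of worth 8, Ext-Shap₁ = 8/6 > 1 = x₁, so no solution concept
    satisfying I4OA, OIR and SE has its reduction equal to Ext-Shap.
    (Players 1, 2, 3 are encoded as 0, 1, 2 : Fin 3.) -/
theorem stmt17 :
    ∃ v : TSeq 3 → ℝ,
      (v [0] = 1 ∧ v [1] = 3 ∧ v [2] = 4 ∧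
       v [0,1] = 3 ∧ v [0,2] = 4 ∧ v [1,0] = 4 ∧ v [1,2] = 5 ∧ v [2,0] = 5 ∧ v [2,1] = 5 ∧
       v [0,1,2] = 7 ∧ v [0,2,1] = 6 ∧ v [1,0,2] = 8 ∧ v [1,2,0] = 7 ∧
       v [2,0,1] = 7 ∧ v [2,1,0] = 7) ∧
      -- monotone
      (∀ π π' : TSeq 3, π'.Nodup → π ≠ [] → π <+: π' → v π ≤ v π') ∧
      -- the optimal sequence is 213 with worth 8
      (v [1,0,2] = 8 ∧ ∀ π : TSeq 3, π.Nodup → π ≠ [] → v π ≤ 8) ∧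
      -- unique basis solution x = (1,3,4)
      (∀ x : Fin 3 → ℝ,
        ((∀ π : TSeq 3, π.Nodup → π ≠ [] → v π ≤ ∑ i ∈ π.toFinset, x i) ∧
         ∑ i : Fin 3, x i = 8)
        ↔ (x 0 = 1 ∧ x 1 = 3 ∧ x 2 = 4)) ∧
      -- Ext-Shap₁ = 8/6 > 1
      (extShap v 0 = 8 / 6 ∧ (1:ℝ) < extShap v 0) ∧
      -- impossibility: no solution concept with I4OA, OIR and SE reduces to Ext-Shap
      ¬ ∃ φ : TSeq 3 → Fin 3 → ℝ,
          (∀ (π : TSeq 3) (i : Fin 3), i ∉ π → φ π i = 0) ∧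
          -- SE
          (∀ π : TSeq 3, π.Nodup → π ≠ [] → ∑ i ∈ π.toFinset, φ π i = v π) ∧
          -- OIR
          (∀ π π' : TSeq 3, π'.Nodup → π <+: π' → ∀ i : Fin 3, φ π i ≤ φ π' i) ∧
          -- I4OA (the optimal sequence is [1,0,2], i.e. 213)
          (∀ π : TSeq 3, π.Nodup → ∀ i : Fin 3, φ π i ≤ φ [1,0,2] i) ∧
          -- reduction equals Ext-Shap
          (∀ i : Fin 3,
            (1 / (3:ℕ).factorial : ℝ) * ∑ σ : Equiv.Perm (Fin 3), φ (List.ofFn ⇑σ) i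
              = extShap v i) := by
  refine ⟨v3, ?_, mono3, ⟨by simp (config := {decide := true}) [v3], opt3⟩, basis3, 
    ⟨extShap3, by rw [extShap3]; norm_num⟩, ?_⟩
  · refine ⟨?_, ?_, ?_, ?_, ?_, ?_, ?_, ?_, ?_, ?_, ?_, ?_, ?_, ?_, ?_⟩ <;>
      (simp (config := {decide := true}) [v3]; try norm_num)
  · rintro ⟨φ, hzero, hSE, hOIR, hI4OA, hred⟩
    have hred0 := hred 0
    rw [extShap3, sum_perm3 (fun π => φ π 0)] at hred0
    have hfac : ((3:ℕ).factorial : ℝ) = 6 := by norm_num [Nat.factorial]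
    rw [hfac] at hred0
    -- each term bounded by t := φ [1,0,2] 0
    have ha := hI4OA [0,1,2] (by decide) 0
    have hb := hI4OA [2,1,0] (by decide) 0
    have hc := hI4OA [0,2,1] (by decide) 0
    have hd := hI4OA [1,2,0] (by decide) 0
    have he := hI4OA [2,0,1] (by decide) 0
    have ht : (8:ℝ)/6 ≤ φ [1,0,2] 0 := by linarith
    -- x := φ [1,0,2] is a basis solution
    have hcons : ∀ π : TSeq 3, π.Nodup → π ≠ [] → v3 π ≤ ∑ i ∈ π.toFinset, φ [1,0,2] i := by
      intro π hn hne
      rw [← hSE π hn hne]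
      exact Finset.sum_le_sum (fun i _ => hI4OA π hn i)
    have hsum : ∑ i : Fin 3, φ [1,0,2] i = 8 := by
      have := hSE [1,0,2] (by decide) (by decide)
      rw [show ([1,0,2] : TSeq 3).toFinset = Finset.univ from by decide] at this
      rw [this]
      simp (config := {decide := true}) [v3]
    have hx := (basis3 (φ [1,0,2])).1 ⟨hcons, hsum⟩
    rw [hx.1] at ht
    linarith
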